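/- arXiv:1805.02506 — 3 statements merged into one kernel-verified Lean document; each statement's English description precedes it below -/
import Mathlib

section
/- Let ω : (0, a] → [0,∞) satisfy c₁ω(t) ≤ ω(s) ≤ c₂ω(t) whenever t/2 ≤ s ≤ t ≤ a and ∫₀ᵃ ω(t)/t dt < ∞. Fix γ ∈ (0,1), κ ∈ (0,1/2], set ω̂(r) = ω(r) for r < a and ω̂(r) = ω(a) for r ≥ a, and ω̃(r) = Σ_{i=1}^∞ κ^{γi} ω̂(κ^{-i} r). Then ∫₀ᵃ ω̃(t)/t dt < ∞. -/
open Real Set MeasureTheory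

/-- The regularized modulus `ω̃(r) = Σ_{i=1}^∞ κ^{γi} ω̂(κ^{-i} r)`, where
`ω̂(r) = ω(r)` for `r < a` and `ω̂(r) = ω(a)` for `r ≥ a`. -/
noncomputable def omegaTilde (a κ γ : ℝ) (ω : ℝ → ℝ) (r : ℝ) : ℝ :=
  ∑' i : ℕ, κ ^ (γ * ((i : ℝ) + 1)) *
    (if κ ^ (-((i : ℝ) + 1)) * r < a then ω (κ ^ (-((i : ℝ) + 1)) * r) else ω a)

lemma scale_lintegral (F : ℝ → ENNReal) (hF : Measurable F) {c : ℝ} (hc : 0 < c)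
    {s : Set ℝ} (hs : MeasurableSet s) :
    ∫⁻ t in (fun x => c * x) ⁻¹' s, F (c * t) = ENNReal.ofReal c⁻¹ * ∫⁻ u in s, F u := by
  have h1 : ∫⁻ t in (fun x => c * x) ⁻¹' s, F (c * t)
      = ∫⁻ u in s, F u ∂(Measure.map (fun x => c * x) volume) := by
    rw [Measure.restrict_map (measurable_const_mul c) hs,
      lintegral_map hF (measurable_const_mul c)]
  rw [h1, Real.map_volume_mul_left (ne_of_gt hc), abs_of_pos (inv_pos.2 hc),
    Measure.restrict_smul, lintegral_smul_measure, smul_eq_mul]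

theorem stmt_1 (a c₁ c₂ γ κ : ℝ) (ω : ℝ → ℝ)
    (ha : 0 < a) (hc₁ : 0 < c₁) (hc₂ : 0 < c₂)
    (hmeas : Measurable ω)
    (hnn : ∀ t ∈ Set.Ioc 0 a, 0 ≤ ω t)
    (hdbl : ∀ s t : ℝ, 0 < t → t / 2 ≤ s → s ≤ t → t ≤ a →
      c₁ * ω t ≤ ω s ∧ ω s ≤ c₂ * ω t)
    (hdini : ∫⁻ t in Set.Ioc 0 a, ENNReal.ofReal (ω t / t) < ⊤)
    (hγ : γ ∈ Set.Ioo (0 : ℝ) 1) (hκ : κ ∈ Set.Ioc (0 : ℝ) (1 / 2)) :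
    ∫⁻ t in Set.Ioc 0 a, ENNReal.ofReal (omegaTilde a κ γ ω t / t) < ⊤ := by
  obtain ⟨hγ0, hγ1⟩ := hγ
  obtain ⟨hκ0, hκ2⟩ := hκ
  have hκ1 : κ < 1 := lt_of_le_of_lt hκ2 (by norm_num)
  have hωa : 0 ≤ ω a := hnn a ⟨ha, le_refl a⟩
  set D := ∫⁻ t in Set.Ioc 0 a, ENNReal.ofReal (ω t / t) with hD
  set q : ℝ := κ ^ γ with hq
  have hq0 : 0 < q := Real.rpow_pos_of_pos hκ0 γ
  have hq1 : q < 1 := Real.rpow_lt_one hκ0.le hκ1 hγ0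
  set L : ℝ := Real.log κ⁻¹ with hL
  have hL0 : 0 ≤ L := by
    rw [hL, Real.log_inv]
    linarith [Real.log_nonpos hκ0.le hκ1.le]
  -- facts about c_i := κ ^ (-(i+1))
  have hci1 : ∀ i : ℕ, 1 < κ ^ (-((i : ℝ) + 1)) := by
    intro i
    rw [Real.one_lt_rpow_iff_of_pos hκ0]
    have : (0:ℝ) < (i : ℝ) + 1 := by positivity
    exact Or.inr ⟨hκ1, by linarith⟩
  have hci0 : ∀ i : ℕ, 0 < κ ^ (-((i : ℝ) + 1)) := fun i => lt_trans one_pos (hci1 i)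
  -- nonnegativity of ω̂ values
  have homhat : ∀ i : ℕ, ∀ t : ℝ, 0 < t →
      0 ≤ (if κ ^ (-((i : ℝ) + 1)) * t < a then ω (κ ^ (-((i : ℝ) + 1)) * t) else ω a) := by
    intro i t ht
    split_ifs with h
    · exact hnn _ ⟨mul_pos (hci0 i) ht, h.le⟩
    · exact hωa
  -- measurability of summands
  have hmeasF : Measurable (fun u : ℝ => ENNReal.ofReal (ω u / u)) :=
    (hmeas.div measurable_id).ennreal_ofReal
  have hmeashat : ∀ i : ℕ, Measurable (fun t : ℝ =>
      ENNReal.ofReal ((if κ ^ (-((i : ℝ) + 1)) * t < a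
        then ω (κ ^ (-((i : ℝ) + 1)) * t) else ω a) / t)) := by
    intro i
    apply Measurable.ennreal_ofReal
    exact (Measurable.ite (measurableSet_lt (measurable_const_mul _) measurable_const)
      (hmeas.comp (measurable_const_mul _)) measurable_const).div measurable_id
  have hmeasg : ∀ i : ℕ, Measurable (fun t : ℝ =>
      ENNReal.ofReal ((κ ^ (γ * ((i : ℝ) + 1)) * (if κ ^ (-((i : ℝ) + 1)) * t < a
        then ω (κ ^ (-((i : ℝ) + 1)) * t) else ω a)) / t)) := by
    intro i
    apply Measurable.ennreal_ofReal
    exact (Measurable.const_mul (Measurable.ite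
      (measurableSet_lt (measurable_const_mul _) measurable_const)
      (hmeas.comp (measurable_const_mul _)) measurable_const) _).div measurable_id
  -- exponent rewriting
  have hqe : ∀ i : ℕ, κ ^ (γ * ((i : ℝ) + 1)) = q ^ (i + 1) := by
    intro i
    have h1 : ((i : ℝ) + 1) = ((i + 1 : ℕ) : ℝ) := by push_cast; ring
    rw [hq, h1, Real.rpow_mul hκ0.le, Real.rpow_natCast]
  -- the per-index computation
  have hEi : ∀ i : ℕ,
      (∫⁻ t in Set.Ioc 0 a, ENNReal.ofReal
        ((κ ^ (γ * ((i : ℝ) + 1)) * (if κ ^ (-((i : ℝ) + 1)) * t < a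
          then ω (κ ^ (-((i : ℝ) + 1)) * t) else ω a)) / t))
      = ENNReal.ofReal (q ^ (i + 1)) * D
        + ENNReal.ofReal (q ^ (i + 1) * (ω a * (((i : ℝ) + 1) * L))) := by
    intro i
    set c : ℝ := κ ^ (-((i : ℝ) + 1)) with hcdef
    have hc1 : 1 < c := hci1 i
    have hc0 : 0 < c := hci0 i
    have hac : 0 < a / c := div_pos ha hc0
    have haca : a / c < a := div_lt_self ha hc1
    have hfac : (fun t : ℝ => ENNReal.ofReal
        ((κ ^ (γ * ((i : ℝ) + 1)) * (if c * t < a then ω (c * t) else ω a)) / t))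
        = fun t : ℝ => ENNReal.ofReal (q ^ (i + 1)) *
          ENNReal.ofReal ((if c * t < a then ω (c * t) else ω a) / t) := by
      funext t
      rw [mul_div_assoc, ENNReal.ofReal_mul (Real.rpow_nonneg hκ0.le _), hqe i]
    have hI : (∫⁻ t in Set.Ioc 0 a,
        ENNReal.ofReal ((if c * t < a then ω (c * t) else ω a) / t))
        = D + ENNReal.ofReal (ω a) * ENNReal.ofReal (((i : ℝ) + 1) * L) := by
      rw [← Set.Ioc_union_Ioc_eq_Ioc hac.le haca.le,
        lintegral_union measurableSet_Ioc (Set.Ioc_disjoint_Ioc_of_le le_rfl)]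
      congr 1
      · -- piece 1 : change of variables
        rw [setLIntegral_congr (Ioo_ae_eq_Ioc (μ := volume) (a := (0:ℝ)) (b := a/c)).symm]
        have hcongr : ∀ t ∈ Set.Ioo (0:ℝ) (a/c),
            ENNReal.ofReal ((if c * t < a then ω (c * t) else ω a) / t)
            = ENNReal.ofReal c * (fun u => ENNReal.ofReal (ω u / u)) (c * t) := by
          intro t ht
          have htc : c * t < a := by
            rw [mul_comm, ← lt_div_iff₀ hc0]
            exact ht.2
          rw [if_pos htc]
          simp only
          rw [← ENNReal.ofReal_mul hc0.le]
          congr 1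
          rw [← mul_div_assoc, mul_div_mul_left _ _ hc0.ne']
        have hFc : Measurable fun t : ℝ => (fun u => ENNReal.ofReal (ω u / u)) (c * t) :=
          hmeasF.comp (measurable_const_mul c)
        rw [setLIntegral_congr_fun measurableSet_Ioo hcongr,
          lintegral_const_mul _ hFc]
        have hpre : Set.Ioo (0:ℝ) (a/c) = (fun x => c * x) ⁻¹' Set.Ioo 0 a := by
          rw [Set.preimage_const_mul_Ioo₀ _ _ hc0, zero_div]
        rw [hpre, scale_lintegral _ hmeasF hc0 measurableSet_Ioo, ← mul_assoc,
          ← ENNReal.ofReal_mul hc0.le, mul_inv_cancel₀ hc0.ne', ENNReal.ofReal_one, one_mul,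
          setLIntegral_congr (Ioo_ae_eq_Ioc (μ := volume) (a := (0:ℝ)) (b := a)), hD]
      · -- piece 2 : the logarithmic tail
        have hcongr : ∀ t ∈ Set.Ioc (a/c) a,
            ENNReal.ofReal ((if c * t < a then ω (c * t) else ω a) / t)
            = ENNReal.ofReal (ω a) * ENNReal.ofReal t⁻¹ := by
          intro t ht
          have hnotlt : ¬ (c * t < a) := by
            rw [not_lt, mul_comm, ← div_le_iff₀ hc0]
            exact ht.1.le
          rw [if_neg hnotlt, div_eq_mul_inv, ENNReal.ofReal_mul hωa]
        rw [setLIntegral_congr_fun measurableSet_Ioc hcongr,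
          lintegral_const_mul _ measurable_inv.ennreal_ofReal]
        congr 1
        have h0mem : (0:ℝ) ∉ Set.uIcc (a/c) a := by
          rw [Set.uIcc_of_le haca.le]
          rintro ⟨h1, -⟩
          exact absurd h1 (not_le.mpr hac)
        have hInt : IntegrableOn (fun t : ℝ => t⁻¹) (Set.Ioc (a/c) a) volume :=
          (intervalIntegrable_iff_integrableOn_Ioc_of_le haca.le).mp
            (intervalIntegrable_inv_iff.mpr (Or.inr h0mem))
        have hnnae : 0 ≤ᵐ[volume.restrict (Set.Ioc (a/c) a)] fun t : ℝ => t⁻¹ := by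
          filter_upwards [ae_restrict_mem measurableSet_Ioc] with t ht
          exact inv_nonneg.2 (le_trans hac.le ht.1.le)
        rw [← MeasureTheory.ofReal_integral_eq_lintegral_ofReal hInt hnnae]
        congr 1
        rw [← intervalIntegral.integral_of_le haca.le, integral_inv h0mem]
        have hdd : a / (a / c) = c := by field_simp
        rw [hdd, hcdef, Real.log_rpow hκ0, hL, Real.log_inv]
        ring
    rw [hfac, lintegral_const_mul _ (hmeashat i), hI, mul_add]
    congr 1
    rw [ENNReal.ofReal_mul (by positivity : (0:ℝ) ≤ q ^ (i + 1)), ENNReal.ofReal_mul hωa]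
  -- summability facts
  have hS1 : Summable fun i : ℕ => q ^ (i + 1) := by
    simpa only [pow_succ] using (summable_geometric_of_lt_one hq0.le hq1).mul_right q
  have hS2 : Summable (fun i : ℕ => q ^ (i + 1) * (ω a * (((i : ℝ) + 1) * L))) := by
    have h := (summable_nat_add_iff 1).mpr
      (summable_pow_mul_geometric_of_norm_lt_one 1 (r := q)
        (by rwa [Real.norm_eq_abs, abs_of_pos hq0]))
    refine (h.mul_left (ω a * L)).congr fun i => ?_
    push_cast
    ring
  -- pointwise bound
  have hpt : ∀ᵐ t ∂(volume.restrict (Set.Ioc 0 a)),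
      ENNReal.ofReal (omegaTilde a κ γ ω t / t)
      ≤ ∑' i : ℕ, ENNReal.ofReal ((κ ^ (γ * ((i : ℝ) + 1)) *
          (if κ ^ (-((i : ℝ) + 1)) * t < a then ω (κ ^ (-((i : ℝ) + 1)) * t) else ω a)) / t) := by
    filter_upwards [ae_restrict_mem measurableSet_Ioc] with t ht
    have hnn' : ∀ i : ℕ, 0 ≤ (κ ^ (γ * ((i : ℝ) + 1)) *
        (if κ ^ (-((i : ℝ) + 1)) * t < a then ω (κ ^ (-((i : ℝ) + 1)) * t) else ω a)) / t :=
      fun i => div_nonneg (mul_nonneg (Real.rpow_nonneg hκ0.le _) (homhat i t ht.1)) ht.1.le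
    simp only [omegaTilde]
    rw [← tsum_div_const]
    by_cases hsum : Summable fun i : ℕ => (κ ^ (γ * ((i : ℝ) + 1)) *
        (if κ ^ (-((i : ℝ) + 1)) * t < a then ω (κ ^ (-((i : ℝ) + 1)) * t) else ω a)) / t
    · rw [ENNReal.ofReal_tsum_of_nonneg hnn' hsum]
    · rw [tsum_eq_zero_of_not_summable hsum]
      simp
  calc ∫⁻ t in Set.Ioc 0 a, ENNReal.ofReal (omegaTilde a κ γ ω t / t)
      ≤ ∫⁻ t in Set.Ioc 0 a, ∑' i : ℕ, ENNReal.ofReal ((κ ^ (γ * ((i : ℝ) + 1)) *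
          (if κ ^ (-((i : ℝ) + 1)) * t < a then ω (κ ^ (-((i : ℝ) + 1)) * t) else ω a)) / t) :=
      lintegral_mono_ae hpt
    _ = ∑' i : ℕ, ∫⁻ t in Set.Ioc 0 a, ENNReal.ofReal ((κ ^ (γ * ((i : ℝ) + 1)) *
          (if κ ^ (-((i : ℝ) + 1)) * t < a then ω (κ ^ (-((i : ℝ) + 1)) * t) else ω a)) / t) :=
      lintegral_tsum fun i => (hmeasg i).aemeasurable
    _ = ∑' i : ℕ, (ENNReal.ofReal (q ^ (i + 1)) * D
          + ENNReal.ofReal (q ^ (i + 1) * (ω a * (((i : ℝ) + 1) * L)))) := tsum_congr hEi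
    _ = (∑' i : ℕ, ENNReal.ofReal (q ^ (i + 1))) * D
          + ∑' i : ℕ, ENNReal.ofReal (q ^ (i + 1) * (ω a * (((i : ℝ) + 1) * L))) := by
      rw [ENNReal.tsum_add, ENNReal.tsum_mul_right]
    _ < ⊤ := by
      have h1 : (∑' i : ℕ, ENNReal.ofReal (q ^ (i + 1))) < ⊤ := by
        rw [← ENNReal.ofReal_tsum_of_nonneg (fun i => by positivity) hS1]
        exact ENNReal.ofReal_lt_top
      have h2 : (∑' i : ℕ, ENNReal.ofReal (q ^ (i + 1) * (ω a * (((i : ℝ) + 1) * L)))) < ⊤ := by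
        rw [← ENNReal.ofReal_tsum_of_nonneg (fun i => mul_nonneg (by positivity)
          (mul_nonneg hωa (mul_nonneg (by positivity) hL0))) hS2]
        exact ENNReal.ofReal_lt_top
      exact ENNReal.add_lt_top.mpr ⟨ENNReal.mul_lt_top h1 hdini, h2⟩
end

section
/- Let C₀ > 0, κ ∈ (0,1/2], γ ∈ (0,1), and suppose ω : (0,1] → [0,∞) satisfies ω(r) ≤ C₀ (ln r)^{-2} for all r ∈ (0,1/2) and ω is bounded on [1/2,1]. Define ω̃(r) = Σ_{i=1}^∞ κ^{γi}(ω(κ^{-i}r)·1[κ^{-i}r < 1] + ω(1)·1[κ^{-i}r ≥ 1]). Then there is a constant C, depending only on C₀, the bound of ω on [1/2,1], κ, and γ, such that ω̃(r) ≤ C (ln r)^{-2} for all r ∈ (0,1/2). -/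
open Real

private lemma aux_rpow_log (γ r : ℝ) (hγ : 0 < γ) (hr0 : 0 < r) (hr1 : r < 1) :
    r ^ (γ/4) * (Real.log r)^2 ≤ 64/γ^2 := by
  set u := r ^ (γ/8) with hu
  have hu0 : 0 < u := Real.rpow_pos_of_pos hr0 _
  have hlu : Real.log u = γ/8 * Real.log r := Real.log_rpow hr0 _
  have hlr : Real.log r < 0 := Real.log_neg hr0 hr1
  have hlu0 : Real.log u < 0 := by rw [hlu]; nlinarith only [hlr, hγ]
  have hneg : -Real.log u ≤ u⁻¹ := by
    have h := Real.log_le_sub_one_of_pos (inv_pos.mpr hu0)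
    rw [Real.log_inv] at h; linarith only [h, inv_pos.mpr hu0]
  have hsqlog : (Real.log u)^2 ≤ (u⁻¹)^2 := by nlinarith only [hneg, hlu0]
  have hsq : r ^ (γ/4) = u^2 := by
    rw [hu, ← Real.rpow_natCast (r ^ (γ/8)) 2, ← Real.rpow_mul hr0.le]
    congr 1; ring
  have hlr2 : (Real.log r)^2 = (8/γ)^2 * (Real.log u)^2 := by
    rw [hlu]; field_simp
  have huu : u^2 * (u⁻¹)^2 = 1 := by field_simp
  have key : u^2 * (Real.log u)^2 ≤ 1 := by nlinarith only [hsqlog, huu, sq_nonneg u, hu0]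
  rw [hsq, hlr2]
  have heq : u^2 * ((8/γ)^2 * (Real.log u)^2) = (8/γ)^2 * (u^2 * (Real.log u)^2) := by ring
  rw [heq]
  have h8 : (8/γ)^2 = 64/γ^2 := by ring
  nlinarith only [key, sq_nonneg (8/γ), h8]

theorem stmt_15 (C₀ B₁ κ γ : ℝ) (hC₀ : 0 < C₀) (hB₁ : 0 < B₁)
    (hκ : κ ∈ Set.Ioc (0 : ℝ) (1 / 2)) (hγ : γ ∈ Set.Ioo (0 : ℝ) 1) (ω : ℝ → ℝ)
    (hnn : ∀ r ∈ Set.Ioc (0 : ℝ) 1, 0 ≤ ω r)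
    (hsmall : ∀ r ∈ Set.Ioo (0 : ℝ) (1 / 2), ω r ≤ C₀ * ((Real.log r) ^ 2)⁻¹)
    (hbig : ∀ r ∈ Set.Icc (1 / 2 : ℝ) 1, ω r ≤ B₁) :
    ∃ C > 0, ∀ r ∈ Set.Ioo (0 : ℝ) (1 / 2),
      (∑' i : ℕ, κ ^ (γ * ((i : ℝ) + 1)) *
        (if κ ^ (-((i : ℝ) + 1)) * r < 1 then ω (κ ^ (-((i : ℝ) + 1)) * r) else ω 1))
        ≤ C * ((Real.log r) ^ 2)⁻¹ := by
  obtain ⟨hκ0, hκ2⟩ := hκ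
  obtain ⟨hγ0, hγ1⟩ := hγ
  have hκ1 : κ < 1 := lt_of_le_of_lt hκ2 (by norm_num)
  set q : ℝ := κ ^ γ with hq
  set q2 : ℝ := κ ^ (γ/2) with hq2
  have hq0 : 0 < q := Real.rpow_pos_of_pos hκ0 γ
  have hq1 : q < 1 := Real.rpow_lt_one hκ0.le hκ1 hγ0
  have hq20 : 0 < q2 := Real.rpow_pos_of_pos hκ0 _
  have hq21 : q2 < 1 := Real.rpow_lt_one hκ0.le hκ1 (by positivity)
  have h1q : 0 < 1 - q := by linarith only [hq1]
  have h1q2 : 0 < 1 - q2 := by linarith only [hq21]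
  set K₂ : ℝ := 2*(B₁ + 3*C₀) with hK₂
  have hK₂0 : 0 < K₂ := by positivity
  refine ⟨4*C₀/(1-q) + K₂*(64/γ^2)/(1-q2), add_pos (div_pos (by positivity) h1q) (div_pos (by positivity) h1q2), ?_⟩
  intro r hr
  obtain ⟨hr0, hr2⟩ := hr
  have hr1 : r < 1 := by linarith only [hr2]
  have hlr : Real.log r < 0 := Real.log_neg hr0 hr1
  have hlr2pos : 0 < (Real.log r)^2 := pow_two_pos_of_ne_zero hlr.ne
  have hL : 0 < ((Real.log r)^2)⁻¹ := inv_pos.mpr hlr2pos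
  set L : ℝ := ((Real.log r)^2)⁻¹ with hLdef
  set f : ℕ → ℝ := fun i => κ ^ (γ * ((i : ℝ) + 1)) *
    (if κ ^ (-((i : ℝ) + 1)) * r < 1 then ω (κ ^ (-((i : ℝ) + 1)) * r) else ω 1) with hf
  set g : ℕ → ℝ := fun i => (4*C₀*L*q) * q^i + (K₂ * r^(γ/4) * q2) * q2^i with hg
  have hrg : 0 < r ^ (γ/4) := Real.rpow_pos_of_pos hr0 _
  have hfg : ∀ i, f i ≤ g i := by
    intro i
    have hreq : ((i : ℝ) + 1) = ((i + 1 : ℕ) : ℝ) := by push_cast; ring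
    set n : ℕ := i + 1 with hn
    set p : ℝ := κ ^ n with hp
    have hp0 : 0 < p := pow_pos hκ0 n
    have hrew1 : κ ^ (γ * ((i : ℝ) + 1)) = p ^ γ := by
      rw [hreq, mul_comm, Real.rpow_mul hκ0.le, Real.rpow_natCast]
    have hrew2 : κ ^ (-((i : ℝ) + 1)) * r = r / p := by
      rw [hreq, Real.rpow_neg hκ0.le, Real.rpow_natCast]
      field_simp
      exact hp
    have hqp : q ^ n = p ^ γ := by
      rw [hq, hp, ← Real.rpow_natCast (κ ^ γ) n, ← Real.rpow_natCast κ n,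
        ← Real.rpow_mul hκ0.le, ← Real.rpow_mul hκ0.le, mul_comm]
    have hq2p : q2 ^ n = p ^ (γ/2) := by
      rw [hq2, hp, ← Real.rpow_natCast (κ ^ (γ/2)) n, ← Real.rpow_natCast κ n,
        ← Real.rpow_mul hκ0.le, ← Real.rpow_mul hκ0.le, mul_comm]
    have hqn : q * q ^ i = q ^ n := by rw [hn, pow_succ, mul_comm]
    have hq2n : q2 * q2 ^ i = q2 ^ n := by rw [hn, pow_succ, mul_comm]
    set s : ℝ := r / p with hs
    have hs0 : 0 < s := div_pos hr0 hp0
    have hpg0 : 0 < p ^ γ := Real.rpow_pos_of_pos hp0 γ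
    have hpg20 : 0 < p ^ (γ/2) := Real.rpow_pos_of_pos hp0 _
    have hpsplit : p ^ γ = p ^ (γ/2) * p ^ (γ/2) := by
      rw [← Real.rpow_add hp0]; norm_num
    have hfi : f i = p ^ γ * (if s < 1 then ω s else ω 1) := by
      simp only [hf, hrew1, hrew2]
    have hgi : g i = (4*C₀*L) * (p ^ γ) + (K₂ * r^(γ/4)) * (p ^ (γ/2)) := by
      simp only [hg]
      rw [mul_assoc (4*C₀*L), hqn, hqp, mul_assoc (K₂ * r^(γ/4)), hq2n, hq2p]
    have hfirst0 : 0 ≤ (4*C₀*L) * (p ^ γ) := by positivity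
    rw [hfi, hgi]
    by_cases hsh : 1/2 ≤ s
    · -- w ≤ B₁, p ≤ 2r
      have hw : (if s < 1 then ω s else ω 1) ≤ B₁ := by
        split_ifs with h1
        · exact hbig s ⟨hsh, h1.le⟩
        · exact hbig 1 ⟨by norm_num, le_refl 1⟩
      have hp2r : p ≤ 2 * r := by
        rw [hs, le_div_iff₀ hp0] at hsh; linarith only [hsh]
      have h1 : p ^ (γ/2) ≤ (2*r) ^ (γ/2) :=
        Real.rpow_le_rpow hp0.le hp2r (by positivity)
      have h2 : (2*r) ^ (γ/2) = 2^(γ/2) * r^(γ/2) := Real.mul_rpow (by norm_num) hr0.le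
      have h3 : (2:ℝ)^(γ/2) ≤ 2 := by
        calc (2:ℝ)^(γ/2) ≤ (2:ℝ)^(1:ℝ) :=
              Real.rpow_le_rpow_of_exponent_le (by norm_num) (by linarith only [hγ1])
          _ = 2 := Real.rpow_one 2
      have h4 : r^(γ/2) ≤ r^(γ/4) :=
        Real.rpow_le_rpow_of_exponent_ge hr0 hr1.le (by linarith only [hγ0])
      have h5 : p ^ (γ/2) ≤ 2 * r^(γ/4) := by
        calc p ^ (γ/2) ≤ 2^(γ/2) * r^(γ/2) := by rw [← h2]; exact h1
          _ ≤ 2 * r^(γ/4) :=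
            mul_le_mul h3 h4 (Real.rpow_nonneg hr0.le _) (by norm_num)
      calc p ^ γ * (if s < 1 then ω s else ω 1) ≤ p ^ γ * B₁ :=
            mul_le_mul_of_nonneg_left hw hpg0.le
        _ = (p^(γ/2) * B₁) * p^(γ/2) := by rw [hpsplit]; ring
        _ ≤ ((2 * r^(γ/4)) * B₁) * p^(γ/2) := by
            apply mul_le_mul_of_nonneg_right _ hpg20.le
            exact mul_le_mul_of_nonneg_right h5 hB₁.le
        _ ≤ (K₂ * r^(γ/4)) * (p ^ (γ/2)) := by
            apply mul_le_mul_of_nonneg_right _ hpg20.le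
            have : (2 * r^(γ/4)) * B₁ = (2*B₁) * r^(γ/4) := by ring
            rw [this]
            apply mul_le_mul_of_nonneg_right _ hrg.le
            rw [hK₂]; linarith only [hC₀]
        _ ≤ (4*C₀*L) * (p ^ γ) + (K₂ * r^(γ/4)) * (p ^ (γ/2)) :=
            le_add_of_nonneg_left hfirst0
    · push_neg at hsh
      have hs1 : s < 1 := by linarith only [hsh]
      rw [if_pos hs1]
      have hws : ω s ≤ C₀ * ((Real.log s)^2)⁻¹ := hsmall s ⟨hs0, hsh⟩
      have hls : Real.log s < 0 := Real.log_neg hs0 hs1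
      by_cases hsB : s ≤ Real.sqrt r
      · have hsqr : Real.log s ≤ (1/2) * Real.log r := by
          calc Real.log s ≤ Real.log (Real.sqrt r) := Real.log_le_log hs0 hsB
            _ = (1/2) * Real.log r := by rw [Real.log_sqrt hr0.le]; ring
        have hsq2 : ((1/2) * Real.log r)^2 ≤ (Real.log s)^2 := by
          nlinarith only [hsqr, hlr]
        have hinv : ((Real.log s)^2)⁻¹ ≤ 4 * L := by
          rw [hLdef]
          have h14 : (0:ℝ) < ((1/2) * Real.log r)^2 := by
            apply pow_two_pos_of_ne_zero
            intro h
            rw [mul_eq_zero] at h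
            rcases h with h | h
            · norm_num at h
            · exact hlr.ne h
          calc ((Real.log s)^2)⁻¹ ≤ (((1/2) * Real.log r)^2)⁻¹ :=
                inv_anti₀ h14 hsq2
            _ = 4 * ((Real.log r)^2)⁻¹ := by
                rw [mul_pow, mul_inv]; norm_num
        have hws4 : ω s ≤ (4*C₀*L) := by
          calc ω s ≤ C₀ * ((Real.log s)^2)⁻¹ := hws
            _ ≤ C₀ * (4*L) := mul_le_mul_of_nonneg_left hinv hC₀.le
            _ = 4*C₀*L := by ring
        calc p ^ γ * ω s ≤ p ^ γ * (4*C₀*L) := mul_le_mul_of_nonneg_left hws4 hpg0.le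
          _ = (4*C₀*L) * (p ^ γ) := by ring
          _ ≤ (4*C₀*L) * (p ^ γ) + (K₂ * r^(γ/4)) * (p ^ (γ/2)) :=
              le_add_of_nonneg_right (by positivity)
      · push_neg at hsB
        have hsr0 : 0 < Real.sqrt r := Real.sqrt_pos.mpr hr0
        have hp_sqrt : p ≤ Real.sqrt r := by
          have hdiv : r / s < r / Real.sqrt r := div_lt_div_of_pos_left hr0 hsr0 hsB
          rw [Real.div_sqrt] at hdiv
          have hps : r / s = p := by rw [hs]; field_simp
          rw [hps] at hdiv
          exact hdiv.le
        have hpg2 : p ^ (γ/2) ≤ r ^ (γ/4) := by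
          calc p ^ (γ/2) ≤ (Real.sqrt r) ^ (γ/2) :=
                Real.rpow_le_rpow hp0.le hp_sqrt (by positivity)
            _ = r ^ (γ/4) := by
                rw [Real.sqrt_eq_rpow, ← Real.rpow_mul hr0.le]
                congr 1; ring
        have hls2 : Real.log s < -Real.log 2 := by
          have h := Real.log_lt_log hs0 hsh
          rwa [Real.log_div one_ne_zero (by norm_num), Real.log_one, zero_sub] at h
        have hlog2 : (0.6931471803:ℝ) < Real.log 2 := Real.log_two_gt_d9
        have hinv3 : ((Real.log s)^2)⁻¹ ≤ 3 := by
          have h2 : (1:ℝ)/3 ≤ (Real.log s)^2 := by nlinarith only [hls2, hlog2]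
          have h3 := inv_anti₀ (by norm_num : (0:ℝ) < 1/3) h2
          calc ((Real.log s)^2)⁻¹ ≤ ((1:ℝ)/3)⁻¹ := h3
            _ = 3 := by norm_num
        have hws3 : ω s ≤ 3*C₀ := by
          calc ω s ≤ C₀ * ((Real.log s)^2)⁻¹ := hws
            _ ≤ C₀ * 3 := mul_le_mul_of_nonneg_left hinv3 hC₀.le
            _ = 3*C₀ := by ring
        calc p ^ γ * ω s ≤ p ^ γ * (3*C₀) := mul_le_mul_of_nonneg_left hws3 hpg0.le
          _ = (p^(γ/2) * (3*C₀)) * p^(γ/2) := by rw [hpsplit]; ring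
          _ ≤ (r^(γ/4) * (3*C₀)) * p^(γ/2) := by
              apply mul_le_mul_of_nonneg_right _ hpg20.le
              exact mul_le_mul_of_nonneg_right hpg2 (by positivity)
          _ ≤ (K₂ * r^(γ/4)) * (p ^ (γ/2)) := by
              apply mul_le_mul_of_nonneg_right _ hpg20.le
              have heq : r^(γ/4) * (3*C₀) = (3*C₀) * r^(γ/4) := by ring
              rw [heq]
              apply mul_le_mul_of_nonneg_right _ hrg.le
              rw [hK₂]; linarith only [hB₁, hC₀]
          _ ≤ (4*C₀*L) * (p ^ γ) + (K₂ * r^(γ/4)) * (p ^ (γ/2)) :=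
              le_add_of_nonneg_left hfirst0
  have hf0 : ∀ i, 0 ≤ f i := by
    intro i
    simp only [hf]
    apply mul_nonneg (Real.rpow_nonneg hκ0.le _)
    split_ifs with h1
    · exact hnn _ ⟨mul_pos (Real.rpow_pos_of_pos hκ0 _) hr0, h1.le⟩
    · exact hnn 1 ⟨by norm_num, le_refl 1⟩
  have hsum1 : Summable (fun i : ℕ => (4*C₀*L*q) * q^i) :=
    (summable_geometric_of_lt_one hq0.le hq1).mul_left _
  have hsum2 : Summable (fun i : ℕ => (K₂ * r^(γ/4) * q2) * q2^i) :=
    (summable_geometric_of_lt_one hq20.le hq21).mul_left _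
  have hgsum : Summable g := hsum1.add hsum2
  have hfsum : Summable f := Summable.of_nonneg_of_le hf0 hfg hgsum
  have hrlog : r ^ (γ/4) ≤ 64/γ^2 * L := by
    have haux := aux_rpow_log γ r hγ0 hr0 hr1
    rw [hLdef]
    rw [← le_div_iff₀ hlr2pos, div_eq_mul_inv] at haux
    exact haux
  calc (∑' i : ℕ, f i) ≤ ∑' i : ℕ, g i := Summable.tsum_le_tsum hfg hfsum hgsum
    _ = (4*C₀*L*q) * (1-q)⁻¹ + (K₂ * r^(γ/4) * q2) * (1-q2)⁻¹ := by
        rw [hg, Summable.tsum_add hsum1 hsum2, tsum_mul_left, tsum_mul_left,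
          tsum_geometric_of_lt_one hq0.le hq1, tsum_geometric_of_lt_one hq20.le hq21]
    _ ≤ (4*C₀/(1-q) + K₂*(64/γ^2)/(1-q2)) * L := by
        have hiq : 0 < (1-q)⁻¹ := by positivity
        have hiq2 : 0 < (1-q2)⁻¹ := by positivity
        have e1 : (4*C₀*L*q) * (1-q)⁻¹ ≤ (4*C₀/(1-q)) * L := by
          rw [div_eq_mul_inv]
          have h1 : (4*C₀*L*q) * (1-q)⁻¹ = (4*C₀*L*(1-q)⁻¹) * q := by ring
          have h2 : (4*C₀*(1-q)⁻¹) * L = (4*C₀*L*(1-q)⁻¹) * 1 := by ring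
          rw [h1, h2]
          apply mul_le_mul_of_nonneg_left hq1.le (by positivity)
        have e2 : (K₂ * r^(γ/4) * q2) * (1-q2)⁻¹ ≤ (K₂*(64/γ^2)/(1-q2)) * L := by
          rw [div_eq_mul_inv]
          have h1 : K₂ * r^(γ/4) * q2 ≤ K₂ * (64/γ^2 * L) := by
            calc K₂ * r^(γ/4) * q2 ≤ K₂ * r^(γ/4) * 1 :=
                  mul_le_mul_of_nonneg_left hq21.le (by positivity)
              _ = K₂ * r^(γ/4) := by ring
              _ ≤ K₂ * (64/γ^2 * L) := mul_le_mul_of_nonneg_left hrlog hK₂0.le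
          calc (K₂ * r^(γ/4) * q2) * (1-q2)⁻¹ ≤ (K₂ * (64/γ^2 * L)) * (1-q2)⁻¹ :=
                mul_le_mul_of_nonneg_right h1 hiq2.le
            _ = K₂*(64/γ^2) * (1-q2)⁻¹ * L := by ring
        linarith only [e1, e2]
end

section
/- Let ω : (0, R₁] → [0,∞) satisfy ω(ρ) ≤ C₀(ln ρ)^{-2} for all ρ ∈ (0, min(R₁, 1/2)), ω bounded by C₀ on the rest of (0, R₁], and fix γ ∈ (0,1). Define ω^♯(ρ) = sup_{ρ ≤ R ≤ R₁} (ρ/R)^γ ω(R). Then there is a constant C, depending only on C₀, γ, and R₁, such that ∫₀^{2r} ω^♯(t)/t dt ≤ C (ln(1/r))^{-1} for all r ∈ (0, 1/4). -/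
open Real MeasureTheory

lemma key_int {s : ℝ} (hs0 : 0 < s) (hs1 : s < 1) :
    IntegrableOn (fun t => ((Real.log t) ^ 2)⁻¹ / t) (Set.Ioc 0 s) ∧
    ∫ t in Set.Ioc 0 s, ((Real.log t) ^ 2)⁻¹ / t = (-Real.log s)⁻¹ := by
  set a := -Real.log s with ha_def
  have ha : 0 < a := by
    rw [ha_def, neg_pos]
    exact Real.log_neg hs0 hs1
  have himg : (fun u : ℝ => Real.exp (-u)) '' Set.Ioi a = Set.Ioo 0 s := by
    ext x
    simp only [Set.mem_image, Set.mem_Ioi, Set.mem_Ioo]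
    constructor
    · rintro ⟨u, hu, rfl⟩
      refine ⟨Real.exp_pos _, ?_⟩
      have : Real.exp (-u) < Real.exp (-a) := Real.exp_lt_exp.2 (by linarith)
      rwa [ha_def, neg_neg, Real.exp_log hs0] at this
    · rintro ⟨hx0, hxs⟩
      refine ⟨-Real.log x, ?_, by rw [neg_neg, Real.exp_log hx0]⟩
      have : Real.log x < Real.log s := Real.log_lt_log hx0 hxs
      simp only [ha_def]; linarith
  have hderiv : ∀ u ∈ Set.Ioi a, HasDerivWithinAt (fun u : ℝ => Real.exp (-u))
      (-Real.exp (-u)) (Set.Ioi a) u := by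
    intro u _
    have h := ((Real.hasDerivAt_exp (-u)).comp u ((hasDerivAt_id u).neg))
    simpa [Function.comp_def] using h.hasDerivWithinAt
  have hinj : Set.InjOn (fun u : ℝ => Real.exp (-u)) (Set.Ioi a) :=
    fun u _ v _ h => neg_injective (Real.exp_injective h)
  have hfun : (fun u : ℝ => |(-Real.exp (-u))| •
      ((Real.log (Real.exp (-u)) ^ 2)⁻¹ / Real.exp (-u)))
      = fun u : ℝ => (u ^ 2)⁻¹ := by
    funext u
    rw [abs_neg, abs_of_pos (Real.exp_pos _), Real.log_exp, smul_eq_mul, neg_sq,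
      mul_comm, div_mul_eq_mul_div, div_eq_iff (Real.exp_ne_zero _), mul_comm]
  have hrpow : ∀ u ∈ Set.Ioi a, (fun u : ℝ => (u ^ 2)⁻¹) u = (fun u : ℝ => u ^ (-2 : ℝ)) u := by
    intro u hu
    have hu0 : (0:ℝ) < u := ha.trans hu
    show (u ^ 2)⁻¹ = u ^ (-2 : ℝ)
    rw [Real.rpow_neg hu0.le, show ((2:ℝ) = ((2:ℕ):ℝ)) by norm_num, Real.rpow_natCast]
  have hint2 : IntegrableOn (fun u : ℝ => (u ^ 2)⁻¹) (Set.Ioi a) := by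
    refine (integrableOn_Ioi_rpow_of_lt (by norm_num : (-2:ℝ) < -1) ha).congr_fun ?_ measurableSet_Ioi
    intro u hu; exact (hrpow u hu).symm
  constructor
  · rw [integrableOn_Ioc_iff_integrableOn_Ioo, ← himg,
      integrableOn_image_iff_integrableOn_abs_deriv_smul measurableSet_Ioi hderiv hinj]
    rw [show (fun x => |(-Real.exp (-x))| • ((Real.log (Real.exp (-x)) ^ 2)⁻¹ / Real.exp (-x))) = fun u : ℝ => (u ^ 2)⁻¹ from hfun]
    exact hint2
  · rw [MeasureTheory.integral_Ioc_eq_integral_Ioo, ← himg,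
      integral_image_eq_integral_abs_deriv_smul measurableSet_Ioi hderiv hinj]
    rw [show (fun x => |(-Real.exp (-x))| • ((Real.log (Real.exp (-x)) ^ 2)⁻¹ / Real.exp (-x))) = fun u : ℝ => (u ^ 2)⁻¹ from hfun]
    rw [MeasureTheory.setIntegral_congr_fun measurableSet_Ioi hrpow,
      integral_Ioi_rpow_of_lt (by norm_num : (-2:ℝ) < -1) ha]
    rw [show (-2 : ℝ) + 1 = -1 by norm_num, Real.rpow_neg_one]
    field_simp


section
variable (R₁ C₀ γ : ℝ) (ω : ℝ → ℝ)

lemma sharp_ptwise (hR₁ : R₁ ∈ Set.Ioc (0 : ℝ) 1) (hC₀ : 0 < C₀)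
    (hγ : γ ∈ Set.Ioo (0 : ℝ) 1)
    (hnn : ∀ ρ ∈ Set.Ioc 0 R₁, 0 ≤ ω ρ)
    (hsmall : ∀ ρ ∈ Set.Ioo 0 (min R₁ (1 / 2)), ω ρ ≤ C₀ * ((Real.log ρ) ^ 2)⁻¹)
    (hbig : ∀ ρ : ℝ, min R₁ (1 / 2) ≤ ρ → ρ ≤ R₁ → ω ρ ≤ C₀) :
    ∃ C₂ > 0, ∀ t ∈ Set.Ioo (0:ℝ) (1/2),
      (⨆ R : Set.Icc t R₁, (t / (R : ℝ)) ^ γ * ω R) ≤ C₂ * ((Real.log t) ^ 2)⁻¹ := by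
  obtain ⟨hR₁0, hR₁1⟩ := hR₁
  obtain ⟨hγ0, hγ1⟩ := hγ
  set m : ℝ := min R₁ (1/2) with hm_def
  have hm0 : 0 < m := lt_min hR₁0 (by norm_num)
  have hm2 : m ≤ 1/2 := min_le_right _ _
  have hlog2 : 0 < Real.log 2 := Real.log_pos (by norm_num)
  set C₁ : ℝ := C₀ * ((Real.log 2) ^ 2)⁻¹ with hC₁_def
  have hC₁0 : 0 < C₁ := by positivity
  -- uniform bound ω ≤ C₁
  have hC₁ : ∀ R ∈ Set.Ioc (0:ℝ) R₁, ω R ≤ C₁ := by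
    intro R ⟨hR0, hRR₁⟩
    rcases lt_or_ge R m with h | h
    · refine (hsmall R ⟨hR0, h⟩).trans ?_
      have hR12 : R < 1/2 := h.trans_le hm2
      have h1 : Real.log 2 ≤ -Real.log R := by
        rw [← Real.log_inv]
        exact Real.log_le_log (by norm_num) (by rw [le_inv_comm₀] <;> linarith)
      have h2 : (Real.log 2)^2 ≤ (Real.log R)^2 := by
        rw [← neg_sq (Real.log R)]
        exact pow_le_pow_left₀ hlog2.le h1 2
      have : ((Real.log R)^2)⁻¹ ≤ ((Real.log 2)^2)⁻¹ :=
        inv_anti₀ (by positivity) h2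
      exact mul_le_mul_of_nonneg_left this hC₀.le
    · refine (hbig R h hRR₁).trans ?_
      have hl21 : (Real.log 2)^2 ≤ 1 := by
        have : Real.log 2 ≤ 1 := by
          calc Real.log 2 ≤ 2 - 1 := Real.log_le_sub_one_of_pos (by norm_num)
          _ = 1 := by norm_num
        exact pow_le_one₀ hlog2.le this
      have h5 : (1:ℝ) ≤ ((Real.log 2)^2)⁻¹ := by
        rw [le_inv_comm₀ one_pos (by positivity)]; simpa using hl21
      exact le_mul_of_one_le_right hC₀.le h5
  set C₂ : ℝ := C₁ * (Real.log (m^2))^2 + 4*C₀ + C₁*(4/γ)^2 with hC₂_def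
  have hnn1 : 0 ≤ C₁ * (Real.log (m^2))^2 := mul_nonneg hC₁0.le (sq_nonneg _)
  have hnn2 : 0 ≤ C₁ * (4/γ)^2 := mul_nonneg hC₁0.le (sq_nonneg _)
  have hC₂0 : 0 < C₂ := by rw [hC₂_def]; linarith
  have hA : C₁ * (Real.log (m^2))^2 ≤ C₂ := by rw [hC₂_def]; linarith
  have hB : 4*C₀ ≤ C₂ := by rw [hC₂_def]; linarith
  have hD : C₁ * (4/γ)^2 ≤ C₂ := by rw [hC₂_def]; linarith
  refine ⟨C₂, hC₂0, ?_⟩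
  intro t ⟨ht0, ht12⟩
  have hlt : Real.log t < 0 := Real.log_neg ht0 (by linarith)
  have hlt2 : 0 < (Real.log t)^2 := by rw [sq]; exact mul_pos_of_neg_of_neg hlt hlt
  apply Real.iSup_le _ (by positivity)
  rintro ⟨R, hRt, hRR₁⟩
  simp only
  have hR0 : 0 < R := ht0.trans_le hRt
  have hωR : 0 ≤ ω R := hnn R ⟨hR0, hRR₁⟩
  have hpow_le_one : (t / R) ^ γ ≤ 1 :=
    Real.rpow_le_one (by positivity) (div_le_one_of_le₀ hRt hR0.le) hγ0.le
  have hpow_nn : (0:ℝ) ≤ (t / R) ^ γ := Real.rpow_nonneg (by positivity) _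
  rcases le_or_gt (m^2) t with hcase | hcase
  · -- t large: use uniform bound
    have h1 : (Real.log t)^2 ≤ (Real.log (m^2))^2 := by
      have hlm : Real.log (m^2) ≤ Real.log t := Real.log_le_log (by positivity) hcase
      have hlm2 : Real.log (m^2) < 0 := Real.log_neg (by positivity) (by nlinarith)
      rw [← neg_sq (Real.log (m^2))]
      exact sq_le_sq' (by linarith) (by linarith)
    have key : C₁ ≤ (C₁ * (Real.log (m^2))^2) * ((Real.log t)^2)⁻¹ := by
      rw [← div_eq_mul_inv, le_div_iff₀ hlt2]
      exact mul_le_mul_of_nonneg_left h1 hC₁0.le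
    calc (t / R) ^ γ * ω R ≤ 1 * C₁ := mul_le_mul hpow_le_one (hC₁ R ⟨hR0, hRR₁⟩) hωR zero_le_one
      _ = C₁ := one_mul _
      _ ≤ (C₁ * (Real.log (m^2))^2) * ((Real.log t)^2)⁻¹ := key
      _ ≤ C₂ * ((Real.log t)^2)⁻¹ := mul_le_mul_of_nonneg_right hA (by positivity)
  · rcases le_or_gt R (Real.sqrt t) with hRs | hRs
    · -- R small: use hsmall
      have hsm : Real.sqrt t < m := by
        have := Real.sqrt_lt_sqrt (le_of_lt ht0) hcase
        rwa [Real.sqrt_sq hm0.le] at this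
      have hRm : R < m := lt_of_le_of_lt hRs hsm
      have hωbd := hsmall R ⟨hR0, hRm⟩
      have hlogs : Real.log R ≤ Real.log t / 2 := by
        rw [← Real.log_sqrt ht0.le]
        exact Real.log_le_log hR0 hRs
      have hlts : Real.log t / 2 < 0 := by linarith
      have h2 : (Real.log t)^2 / 4 ≤ (Real.log R)^2 := by
        have h2' : (Real.log t / 2)^2 ≤ (-Real.log R)^2 :=
          sq_le_sq' (by linarith) (by linarith)
        have h2'' : (Real.log t / 2)^2 = (Real.log t)^2 / 4 := by ring
        rw [neg_sq] at h2'
        linarith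
      have h3 : ((Real.log R)^2)⁻¹ ≤ 4 * ((Real.log t)^2)⁻¹ := by
        have := inv_anti₀ (by positivity : (0:ℝ) < (Real.log t)^2/4) h2
        rw [show ((Real.log t)^2/4)⁻¹ = 4 * ((Real.log t)^2)⁻¹ by field_simp] at this
        exact this
      calc (t / R) ^ γ * ω R ≤ 1 * (C₀ * ((Real.log R)^2)⁻¹) :=
            mul_le_mul hpow_le_one hωbd hωR zero_le_one
        _ = C₀ * ((Real.log R)^2)⁻¹ := one_mul _
        _ ≤ C₀ * (4 * ((Real.log t)^2)⁻¹) := mul_le_mul_of_nonneg_left h3 hC₀.le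
        _ = (4*C₀) * ((Real.log t)^2)⁻¹ := by ring
        _ ≤ C₂ * ((Real.log t)^2)⁻¹ := mul_le_mul_of_nonneg_right hB (by positivity)
    · -- R ≥ √t : use decay of (t/R)^γ
      have hst : 0 < Real.sqrt t := Real.sqrt_pos.2 ht0
      have hdiv : t / R ≤ Real.sqrt t := by
        rw [← Real.div_sqrt]
        exact div_le_div_of_nonneg_left ht0.le hst hRs.le
      have hpow2 : (t / R) ^ γ ≤ t ^ (γ/2) := by
        calc (t / R) ^ γ ≤ (Real.sqrt t) ^ γ :=
              Real.rpow_le_rpow (by positivity) hdiv hγ0.le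
          _ = t ^ (γ/2) := by
              rw [Real.sqrt_eq_rpow, ← Real.rpow_mul ht0.le]
              congr 1
              ring
      -- t^(γ/2) ≤ (4/γ)^2 * (log t)⁻²
      have hlog_le : -Real.log t ≤ (4/γ) * t ^ (-(γ/4)) := by
        have := Real.log_le_rpow_div (le_of_lt (inv_pos.2 ht0)) (by positivity : (0:ℝ) < γ/4)
        rw [Real.log_inv, Real.inv_rpow ht0.le, ← Real.rpow_neg ht0.le] at this
        calc -Real.log t ≤ t ^ (-(γ/4)) / (γ/4) := this
          _ = (4/γ) * t ^ (-(γ/4)) := by field_simp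
      have hsq : (Real.log t)^2 ≤ (4/γ)^2 * t ^ (-(γ/2)) := by
        have hnl : 0 ≤ -Real.log t := by linarith
        have hrp : (0:ℝ) ≤ (4/γ) * t ^ (-(γ/4)) := by positivity
        have h2 : (-Real.log t)^2 ≤ ((4/γ) * t ^ (-(γ/4)))^2 :=
          pow_le_pow_left₀ hnl hlog_le 2
        rw [neg_sq] at h2
        calc (Real.log t)^2 ≤ ((4/γ) * t ^ (-(γ/4)))^2 := h2
          _ = (4/γ)^2 * (t ^ (-(γ/4)))^2 := by ring
          _ = (4/γ)^2 * t ^ (-(γ/2)) := by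
              rw [← Real.rpow_natCast (t ^ (-(γ/4))) 2, ← Real.rpow_mul ht0.le]
              congr 1
              push_cast; ring
      have hkey : t ^ (γ/2) ≤ (4/γ)^2 * ((Real.log t)^2)⁻¹ := by
        rw [← div_eq_mul_inv, le_div_iff₀ hlt2]
        calc t ^ (γ/2) * (Real.log t)^2 ≤ t ^ (γ/2) * ((4/γ)^2 * t ^ (-(γ/2))) :=
              mul_le_mul_of_nonneg_left hsq (by positivity)
          _ = (4/γ)^2 * (t ^ (γ/2) * t ^ (-(γ/2))) := by ring
          _ = (4/γ)^2 := by
              rw [← Real.rpow_add ht0, add_neg_cancel, Real.rpow_zero, mul_one]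
      calc (t / R) ^ γ * ω R ≤ t ^ (γ/2) * C₁ :=
            mul_le_mul hpow2 (hC₁ R ⟨hR0, hRR₁⟩) hωR (by positivity)
        _ ≤ ((4/γ)^2 * ((Real.log t)^2)⁻¹) * C₁ :=
            mul_le_mul_of_nonneg_right hkey hC₁0.le
        _ = (C₁ * (4/γ)^2) * ((Real.log t)^2)⁻¹ := by ring
        _ ≤ C₂ * ((Real.log t)^2)⁻¹ := mul_le_mul_of_nonneg_right hD (by positivity)

end


/-- The γ-regularized ("sharp") modulus `ω^♯(ρ) = sup_{ρ ≤ R ≤ R₁} (ρ/R)^γ ω(R)`. -/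
noncomputable def sharpMod (R₁ γ : ℝ) (ω : ℝ → ℝ) (ρ : ℝ) : ℝ :=
  ⨆ R : Set.Icc ρ R₁, (ρ / (R : ℝ)) ^ γ * ω R

theorem stmt_16 (R₁ C₀ γ : ℝ) (hR₁ : R₁ ∈ Set.Ioc (0 : ℝ) 1) (hC₀ : 0 < C₀)
    (hγ : γ ∈ Set.Ioo (0 : ℝ) 1) (ω : ℝ → ℝ)
    (hnn : ∀ ρ ∈ Set.Ioc 0 R₁, 0 ≤ ω ρ)
    (hsmall : ∀ ρ ∈ Set.Ioo 0 (min R₁ (1 / 2)), ω ρ ≤ C₀ * ((Real.log ρ) ^ 2)⁻¹)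
    (hbig : ∀ ρ : ℝ, min R₁ (1 / 2) ≤ ρ → ρ ≤ R₁ → ω ρ ≤ C₀) :
    ∃ C > 0, ∀ r ∈ Set.Ioo (0 : ℝ) (1 / 4),
      ∫ t in Set.Ioc 0 (2 * r), sharpMod R₁ γ ω t / t ≤ C * (Real.log (1 / r))⁻¹ := by
  obtain ⟨C₂, hC₂0, hpt⟩ := sharp_ptwise R₁ C₀ γ ω hR₁ hC₀ hγ hnn hsmall hbig
  have hpt' : ∀ t ∈ Set.Ioo (0:ℝ) (1/2),
      sharpMod R₁ γ ω t ≤ C₂ * ((Real.log t) ^ 2)⁻¹ := hpt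
  refine ⟨2 * C₂, by linarith, ?_⟩
  rintro r ⟨hr0, hr14⟩
  have hs0 : (0:ℝ) < 2 * r := by linarith
  have hs1 : 2 * r < 1 := by linarith
  have hs12 : 2 * r < 1/2 := by linarith
  obtain ⟨hgin, hgval⟩ := key_int hs0 hs1
  -- nonnegativity of the integrand
  have hf0 : 0 ≤ᵐ[volume.restrict (Set.Ioc 0 (2*r))] fun t => sharpMod R₁ γ ω t / t := by
    filter_upwards [ae_restrict_mem measurableSet_Ioc] with t ht
    refine div_nonneg (Real.iSup_nonneg ?_) ht.1.le
    rintro ⟨R, hRt, hRR₁⟩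
    exact mul_nonneg (Real.rpow_nonneg (div_nonneg ht.1.le (ht.1.le.trans hRt)) _)
      (hnn R ⟨lt_of_lt_of_le ht.1 hRt, hRR₁⟩)
  -- comparison with the integrable majorant
  have hgi : Integrable (fun t => C₂ * (((Real.log t) ^ 2)⁻¹ / t))
      (volume.restrict (Set.Ioc 0 (2*r))) := hgin.const_mul C₂
  have hle : (fun t => sharpMod R₁ γ ω t / t)
      ≤ᵐ[volume.restrict (Set.Ioc 0 (2*r))]
      fun t => C₂ * (((Real.log t) ^ 2)⁻¹ / t) := by
    filter_upwards [ae_restrict_mem measurableSet_Ioc] with t ht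
    have ht' : t ∈ Set.Ioo (0:ℝ) (1/2) := ⟨ht.1, lt_of_le_of_lt ht.2 hs12⟩
    have h1 := hpt' t ht'
    calc sharpMod R₁ γ ω t / t ≤ (C₂ * ((Real.log t) ^ 2)⁻¹) / t := by
          gcongr
          exact ht.1.le
      _ = C₂ * (((Real.log t) ^ 2)⁻¹ / t) := mul_div_assoc _ _ _
  have hmono := integral_mono_of_nonneg hf0 hgi hle
  have hval : ∫ t in Set.Ioc 0 (2*r), C₂ * (((Real.log t) ^ 2)⁻¹ / t)
      = C₂ * (-Real.log (2*r))⁻¹ := by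
    rw [MeasureTheory.integral_const_mul, hgval]
  -- compare the logarithms
  have hlr : 0 < Real.log (1/r) := by
    rw [one_div, Real.log_inv, neg_pos]
    exact Real.log_neg hr0 (by linarith)
  have hrlt : Real.log r < -(2 * Real.log 2) := by
    have h4 : Real.log (1/4 : ℝ) = -(2 * Real.log 2) := by
      rw [one_div, Real.log_inv, show (4:ℝ) = 2^2 by norm_num, Real.log_pow]
      push_cast; ring
    rw [← h4]
    exact Real.log_lt_log hr0 hr14
  have hhalf : Real.log (1/r) / 2 ≤ -Real.log (2*r) := by
    rw [Real.log_mul (by norm_num) (ne_of_gt hr0), one_div, Real.log_inv]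
    linarith
  have hfin : C₂ * (-Real.log (2*r))⁻¹ ≤ (2 * C₂) * (Real.log (1/r))⁻¹ := by
    have hinv : (-Real.log (2*r))⁻¹ ≤ (Real.log (1/r) / 2)⁻¹ :=
      inv_anti₀ (by linarith) hhalf
    have heq : (Real.log (1/r) / 2)⁻¹ = 2 * (Real.log (1/r))⁻¹ := by
      rw [inv_div, div_eq_mul_inv]
    calc C₂ * (-Real.log (2*r))⁻¹ ≤ C₂ * (Real.log (1/r) / 2)⁻¹ :=
          mul_le_mul_of_nonneg_left hinv hC₂0.le
      _ = (2 * C₂) * (Real.log (1/r))⁻¹ := by rw [heq]; ring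
  calc ∫ t in Set.Ioc 0 (2*r), sharpMod R₁ γ ω t / t
      ≤ ∫ t in Set.Ioc 0 (2*r), C₂ * (((Real.log t) ^ 2)⁻¹ / t) := hmono
    _ = C₂ * (-Real.log (2*r))⁻¹ := hval
    _ ≤ (2 * C₂) * (Real.log (1/r))⁻¹ := hfin
end
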